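/- arXiv:2002.06533 — 2 statements merged into one kernel-verified Lean document; each statement's English description precedes it below -/
import Mathlib

section
/- If P is a random variable with CDF F(p) = 1/ρ - 1/(μ(1-ρ)p) on [f(0), f(1)] (and F = 0 below f(0), F = 1 above f(1)), then E[P] = -log(1-ρ)/(μ(1-ρ)). -/
open MeasureTheory

theorem mean_random_price (ρ μ : ℝ) (hρ0 : 0 < ρ) (hρ1 : ρ < 1) (hμ : 0 < μ)
    (F : ℝ → ℝ)
    (hF : ∀ p : ℝ, F p =
      if p ≤ ρ / (μ * (1 - ρ)) then 0
      else if p ≤ ρ / (μ * (1 - ρ)^2) then 1 / ρ - 1 / (μ * (1 - ρ) * p)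
      else 1) :
    ∫ p in Set.Ioi (0:ℝ), (1 - F p) = -Real.log (1 - ρ) / (μ * (1 - ρ)) := by
  have h1ρ : 0 < 1 - ρ := by linarith
  set a := ρ / (μ * (1 - ρ)) with ha
  set b := ρ / (μ * (1 - ρ)^2) with hb
  have hc : 0 < μ * (1 - ρ) := by positivity
  have ha0 : 0 < a := by positivity
  have hb0 : 0 < b := by positivity
  have hab : a < b := by
    rw [ha, hb, div_lt_div_iff₀ (by positivity) (by positivity)]
    nlinarith [mul_pos (mul_pos hρ0 hμ) (mul_pos h1ρ hρ0)]
  -- values of 1 - F on pieces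
  have hF1 : Set.EqOn (fun p => 1 - F p) (fun _ => (1:ℝ)) (Set.Ioc 0 a) := by
    intro p hp
    simp only [hF p, if_pos hp.2]
    norm_num
  have hF2 : Set.EqOn (fun p => 1 - F p)
      (fun p => (1 - 1/ρ) + (1/(μ * (1 - ρ))) * (1/p)) (Set.Ioc a b) := by
    intro p hp
    have h1 : ¬ p ≤ a := not_le.2 hp.1
    have hp0 : (0:ℝ) < p := lt_trans ha0 hp.1
    simp only [hF p, if_neg h1, if_pos hp.2]
    field_simp
    ring
  have hF3 : Set.EqOn (fun p => 1 - F p) (fun _ => (0:ℝ)) (Set.Ioi b) := by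
    intro p hp
    have h2 : ¬ p ≤ b := not_le.2 hp
    have h1 : ¬ p ≤ a := by push_neg at h2 ⊢; linarith
    simp [hF p, if_neg h1, if_neg h2]
  -- integrability
  have hint1 : IntegrableOn (fun p => 1 - F p) (Set.Ioc 0 a) := by
    apply (integrableOn_const ?_).congr_fun hF1.symm measurableSet_Ioc
    simp [Real.volume_Ioc]
  have hcont : ContinuousOn (fun p => (1 - 1/ρ) + (1/(μ * (1 - ρ))) * (1/p))
      (Set.Icc a b) := by
    apply ContinuousOn.add continuousOn_const
    apply ContinuousOn.mul continuousOn_const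
    apply ContinuousOn.div continuousOn_const continuousOn_id
    intro x hx; exact ne_of_gt (lt_of_lt_of_le ha0 hx.1)
  have hint2 : IntegrableOn (fun p => 1 - F p) (Set.Ioc a b) := by
    exact ((hcont.integrableOn_Icc).mono_set Set.Ioc_subset_Icc_self).congr_fun
      hF2.symm measurableSet_Ioc
  have hint3 : IntegrableOn (fun p => 1 - F p) (Set.Ioi b) := by
    exact (integrableOn_zero).congr_fun hF3.symm measurableSet_Ioi
  -- split
  have hsplit : Set.Ioi (0:ℝ) = Set.Ioc 0 a ∪ (Set.Ioc a b ∪ Set.Ioi b) := by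
    rw [Set.Ioc_union_Ioi_eq_Ioi hab.le, Set.Ioc_union_Ioi_eq_Ioi ha0.le]
  have hd1 : Disjoint (Set.Ioc (0:ℝ) a) (Set.Ioc a b ∪ Set.Ioi b) := by
    rw [Set.Ioc_union_Ioi_eq_Ioi hab.le]
    exact Set.Ioc_disjoint_Ioi le_rfl
  have hd2 : Disjoint (Set.Ioc a b) (Set.Ioi b) := Set.Ioc_disjoint_Ioi le_rfl
  rw [hsplit, setIntegral_union hd1 (measurableSet_Ioc.union measurableSet_Ioi)
        hint1 (hint2.union hint3),
      setIntegral_union hd2 measurableSet_Ioi hint2 hint3,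
      setIntegral_congr_fun measurableSet_Ioc hF1,
      setIntegral_congr_fun measurableSet_Ioc hF2,
      setIntegral_congr_fun measurableSet_Ioi hF3,
      setIntegral_const, integral_zero, Real.volume_real_Ioc, add_zero,
      ← intervalIntegral.integral_of_le hab.le]
  have hi2 : IntervalIntegrable (fun p => (1/(μ * (1 - ρ))) * (1/p)) volume a b :=
    ((continuousOn_const.mul (continuousOn_const.div continuousOn_id
      (fun x hx => ne_of_gt (lt_of_lt_of_le ha0 hx.1)))).intervalIntegrable_of_Icc hab.le)
  rw [intervalIntegral.integral_add intervalIntegrable_const hi2,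
      intervalIntegral.integral_const, intervalIntegral.integral_const_mul,
      integral_one_div (by
        rw [Set.uIcc_of_le hab.le]
        intro h; exact absurd h.1 (not_le.2 ha0))]
  have hba : b / a = (1 - ρ)⁻¹ := by
    rw [ha, hb]; field_simp
  rw [hba, Real.log_inv, max_eq_left (by linarith), smul_eq_mul, smul_eq_mul]
  have hkey : a * 1 + (b - a) * (1 - 1/ρ) = 0 := by
    rw [ha, hb]; field_simp; ring
  have h2 : 1/(μ * (1 - ρ)) * -Real.log (1 - ρ) = -Real.log (1 - ρ) / (μ * (1 - ρ)) := by
    ring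
  rw [sub_zero]
  linarith [hkey, h2]
end

section
/- With B(y) = 1 - 1/ρ + (1/ρ)(1/(1-ρ)² - μy)^{-1/2} on [0, 1/(μ(1-ρ)²) - 1/μ], the mean payment ∫₀^{1/(μ(1-ρ)²) - 1/μ} (1 - B(y)) dy equals ρ/(μ(1-ρ)²). -/
theorem mean_payment_continuous_priority (ρ μ : ℝ) (hρ0 : 0 < ρ) (hρ1 : ρ < 1) (hμ : 0 < μ)
    (B : ℝ → ℝ)
    (hB : ∀ y : ℝ, B y = 1 - 1 / ρ + (1 / ρ) * (1 / Real.sqrt (1 / (1 - ρ)^2 - μ * y))) :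
    ∫ y in (0:ℝ)..(1 / (μ * (1 - ρ)^2) - 1 / μ), (1 - B y) = ρ / (μ * (1 - ρ)^2) := by
  have h1ρ : (0:ℝ) < 1 - ρ := by linarith
  have hμ' : μ ≠ 0 := ne_of_gt hμ
  have hρ' : ρ ≠ 0 := ne_of_gt hρ0
  set c : ℝ := 1 / (1 - ρ)^2 with hc
  set b : ℝ := 1 / (μ * (1 - ρ)^2) - 1 / μ with hbdef
  have hcb : c - μ * b = 1 := by
    rw [hbdef, hc]; field_simp; ring
  have hc1 : 1 < c := by
    rw [hc, one_lt_div (by positivity)]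
    nlinarith
  have hb0 : 0 < b := by nlinarith
  -- lower bound on c - μ y on the interval
  have hlow : ∀ y ∈ Set.uIcc (0:ℝ) b, 1 ≤ c - μ * y := by
    intro y hy
    rw [Set.uIcc_of_le hb0.le] at hy
    obtain ⟨h1, h2⟩ := hy
    nlinarith
  set F : ℝ → ℝ := fun y => (1/ρ) * (y + (2/μ) * Real.sqrt (c - μ * y)) with hF
  have hderiv : ∀ y ∈ Set.uIcc (0:ℝ) b, HasDerivAt F (1 - B y) y := by
    intro y hy
    have hpos : 0 < c - μ * y := lt_of_lt_of_le one_pos (hlow y hy)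
    have hsne : Real.sqrt (c - μ * y) ≠ 0 := by positivity
    have hinner : HasDerivAt (fun y : ℝ => c - μ * y) (-μ) y := by
      simpa using ((hasDerivAt_id y).const_mul μ).const_sub c
    have hsq : HasDerivAt (fun y : ℝ => Real.sqrt (c - μ * y))
        (1 / (2 * Real.sqrt (c - μ * y)) * (-μ)) y :=
      (Real.hasDerivAt_sqrt (ne_of_gt hpos)).comp y hinner
    have : HasDerivAt F ((1/ρ) * (1 + (2/μ) * (1 / (2 * Real.sqrt (c - μ * y)) * (-μ)))) y :=
      ((hasDerivAt_id y).add (hsq.const_mul (2/μ))).const_mul (1/ρ)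
    convert this using 1
    rw [hB y]
    field_simp
    ring
  have hint : IntervalIntegrable (fun y => 1 - B y) MeasureTheory.volume 0 b := by
    apply ContinuousOn.intervalIntegrable
    have hcne : ∀ y ∈ Set.uIcc (0:ℝ) b, Real.sqrt (c - μ * y) ≠ 0 := by
      intro y hy
      have hpos : 0 < c - μ * y := lt_of_lt_of_le one_pos (hlow y hy)
      positivity
    have : ContinuousOn (fun y : ℝ => Real.sqrt (c - μ * y)) (Set.uIcc 0 b) :=
      (Real.continuous_sqrt.comp (by continuity)).continuousOn
    simp only [hB]
    exact continuousOn_const.sub (continuousOn_const.add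
      (continuousOn_const.mul (continuousOn_const.div this hcne)))
  have hsb : Real.sqrt (c - μ * b) = 1 := by rw [hcb, Real.sqrt_one]
  have hs0 : Real.sqrt (c - μ * 0) = 1 / (1 - ρ) := by
    have h : c - μ * 0 = (1 / (1 - ρ))^2 := by rw [hc, mul_zero, sub_zero, div_pow, one_pow]
    rw [h, Real.sqrt_sq (by positivity)]
  rw [intervalIntegral.integral_eq_sub_of_hasDerivAt hderiv hint, hF]
  simp only [hsb, hs0]
  rw [hbdef]
  field_simp
  ring
end
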